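/- Let $q$ not be a root of unity and let $\underline{c} = (c_1, c_2) \in (\mathbb{C}^*)^2$. Let $\tau_{\underline{c}}$ be the automorphism of $\mathcal{A}_q(2)$ with $\tau_{\underline{c}}(x) = c_1 x$, $\tau_{\underline{c}}(y) = c_2 y$. Then the twist of the simple module $L_{(a,b)}[1]$ by $\tau_{\underline{c}}$ (where $u \star w := \tau_{\underline{c}}(u) w$) is isomorphic to $L_{(a,b)}[c_1^a c_2^b]$. -/

import Mathlib

section Aux

lemma aux_zpow_comm_one {G : Type*} [Group G] (σ x y : G)
    (hσ : ∀ g : G, Commute σ g) (h : x * y = σ * (y * x)) (i : ℤ) :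
    x ^ i * y = σ ^ i * (y * x ^ i) := by
  have hc : y⁻¹ * x * y⁻¹⁻¹ = σ * x := by
    rw [inv_inv, mul_assoc, h, ← mul_assoc, ← (hσ y⁻¹).eq, mul_assoc, inv_mul_cancel_left]
  have h2 : y⁻¹ * x ^ i * y⁻¹⁻¹ = σ ^ i * x ^ i := by
    rw [← conj_zpow, hc, (hσ x).mul_zpow]
  rw [inv_inv] at h2
  have h3 : x ^ i * y = y * (y⁻¹ * x ^ i * y) := by group
  rw [h3, h2, ← mul_assoc, ((hσ y).zpow_left i).symm.eq, mul_assoc]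

lemma aux_zpow_comm {G : Type*} [Group G] (σ x y : G)
    (hσ : ∀ g : G, Commute σ g) (h : x * y = σ * (y * x)) (i j : ℤ) :
    x ^ i * y ^ j = σ ^ (i * j) * (y ^ j * x ^ i) := by
  have h1 : y * x = σ⁻¹ * (x * y) := by
    rw [h, ← mul_assoc, inv_mul_cancel, one_mul]
  have h2 : y ^ j * x = (σ⁻¹) ^ j * (x * y ^ j) :=
    aux_zpow_comm_one σ⁻¹ y x (fun g => (hσ g).inv_left) h1 j
  have h3 : x * y ^ j = σ ^ j * (y ^ j * x) := by
    rw [h2, ← mul_assoc, ← mul_assoc, inv_zpow, mul_inv_cancel, one_mul]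
  have h4 := aux_zpow_comm_one (σ ^ j) x (y ^ j) (fun g => (hσ g).zpow_left j) h3 i
  rw [h4, ← zpow_mul, mul_comm j i]

/-- recursive scalar for the iterated shift identity. -/
noncomputable def ccQ (q lam : ℂ) (a b : ℕ) : ℕ → ℤ → ℂ
  | 0, _ => 1
  | (r+1), j => q ^ ((a : ℤ) * (j + (r : ℤ) * (b : ℤ))) * lam * ccQ q lam a b r j

lemma ccQ_ne_zero {q lam : ℂ} (hq : q ≠ 0) (hlam : lam ≠ 0) (a b : ℕ) :
    ∀ r j, ccQ q lam a b r j ≠ 0 := by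
  intro r
  induction r with
  | zero => intro j; simp [ccQ]
  | succ r ih =>
      intro j
      simp only [ccQ]
      exact mul_ne_zero (mul_ne_zero (zpow_ne_zero _ hq) hlam) (ih j)

end Aux

/-- Structure theorem for a simple quantum-plane module with a `K`-eigenvector. -/
theorem qp_module_structure (q : ℂ) (hq : q ≠ 0) (hroot : ∀ k : ℕ, q ^ (k + 1) ≠ 1)
    (a b : ℕ) (ha : 0 < a) (hb : 0 < b)
    (m n : ℕ) (hmn : a * n = b * m + 1)
    (lam : ℂ) (hlam : lam ≠ 0)
    (M : Type*) [AddCommGroup M] [Module ℂ M]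
    (X Y : M →ₗ[ℂ] M) (hrel : X ∘ₗ Y = q • (Y ∘ₗ X))
    (hsimple : ∀ W : Submodule ℂ M,
      (∀ w ∈ W, X w ∈ W) → (∀ w ∈ W, Y w ∈ W) → W = ⊥ ∨ W = ⊤)
    (v₀ : M) (hv₀ : v₀ ≠ 0)
    (hK : ((X ^ a) ∘ₗ (Y ^ b)) v₀ = lam • v₀) :
    ∃ v : ℤ → M,
      LinearIndependent ℂ v ∧ Submodule.span ℂ (Set.range v) = ⊤ ∧
      (∀ k : ℤ, X (v k) = ccQ q lam a b n ((k - b) * n) • v (k - b)) ∧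
      (∀ k : ℤ, Y (v k) =
        (q ^ (-(k * m)) * (ccQ q lam a b m (k * n + 1))⁻¹) • v (k + a)) := by
  have hmnZ : (a : ℤ) * n = (b : ℤ) * m + 1 := by exact_mod_cast hmn
  have hXY : ∀ w, X (Y w) = q • Y (X w) := by
    intro w
    have := LinearMap.ext_iff.mp hrel w
    simpa using this
  have hKapp : (X ^ a) ((Y ^ b) v₀) = lam • v₀ := by
    simpa using hK
  -- neither X nor Y is zero
  have hXzero : ¬ (∀ w : M, X w = 0) := by
    intro h0
    obtain ⟨a', rfl⟩ := Nat.exists_eq_succ_of_ne_zero ha.ne'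
    have h2 : (X ^ (a' + 1)) ((Y ^ b) v₀) = 0 := by
      rw [pow_succ', Module.End.mul_apply, h0]
    rw [hKapp] at h2
    exact hv₀ ((smul_eq_zero_iff_right hlam).mp h2)
  have hYzero : ¬ (∀ w : M, Y w = 0) := by
    intro h0
    obtain ⟨b', rfl⟩ := Nat.exists_eq_succ_of_ne_zero hb.ne'
    have h2 : (X ^ a) ((Y ^ (b' + 1)) v₀) = 0 := by
      rw [pow_succ', Module.End.mul_apply, h0, map_zero]
    rw [hKapp] at h2
    exact hv₀ ((smul_eq_zero_iff_right hlam).mp h2)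
  -- X and Y are bijective
  have hbijX : Function.Bijective X := by
    constructor
    · rw [← LinearMap.ker_eq_bot]
      rcases hsimple (LinearMap.ker X)
        (fun w hw => by
          simp only [LinearMap.mem_ker] at hw ⊢
          rw [hw, map_zero])
        (fun w hw => by
          simp only [LinearMap.mem_ker] at hw ⊢
          rw [hXY w, hw, map_zero, smul_zero]) with h | h
      · exact h
      · exact absurd (fun w => LinearMap.mem_ker.mp
          (h ▸ Submodule.mem_top : w ∈ LinearMap.ker X)) hXzero
    · rw [← LinearMap.range_eq_top]
      rcases hsimple (LinearMap.range X)
        (fun w _ => LinearMap.mem_range_self X w)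
        (fun w hw => by
          obtain ⟨u, rfl⟩ := LinearMap.mem_range.mp hw
          have h3 : Y (X u) = q⁻¹ • X (Y u) := by
            rw [hXY u, smul_smul, inv_mul_cancel₀ hq, one_smul]
          rw [h3]
          exact Submodule.smul_mem _ _ (LinearMap.mem_range_self X (Y u))) with h | h
      · exfalso
        apply hXzero
        intro w
        have : X w ∈ (⊥ : Submodule ℂ M) := h ▸ LinearMap.mem_range_self X w
        simpa using this
      · exact h
  have hbijY : Function.Bijective Y := by
    constructor
    · rw [← LinearMap.ker_eq_bot]
      rcases hsimple (LinearMap.ker Y)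
        (fun w hw => by
          simp only [LinearMap.mem_ker] at hw ⊢
          have h3 : Y (X w) = q⁻¹ • X (Y w) := by
            rw [hXY w, smul_smul, inv_mul_cancel₀ hq, one_smul]
          rw [h3, hw, map_zero, smul_zero])
        (fun w hw => by
          simp only [LinearMap.mem_ker] at hw ⊢
          rw [hw, map_zero]) with h | h
      · exact h
      · exact absurd (fun w => LinearMap.mem_ker.mp
          (h ▸ Submodule.mem_top : w ∈ LinearMap.ker Y)) hYzero
    · rw [← LinearMap.range_eq_top]
      rcases hsimple (LinearMap.range Y)
        (fun w hw => by
          obtain ⟨u, rfl⟩ := LinearMap.mem_range.mp hw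
          rw [hXY u]
          exact Submodule.smul_mem _ _ (LinearMap.mem_range_self Y (X u)))
        (fun w _ => LinearMap.mem_range_self Y w) with h | h
      · exfalso
        apply hYzero
        intro w
        have : Y w ∈ (⊥ : Submodule ℂ M) := h ▸ LinearMap.mem_range_self Y w
        simpa using this
      · exact h
  -- units
  have hXu : IsUnit (X : Module.End ℂ M) := (Module.End.isUnit_iff X).mpr hbijX
  have hYu : IsUnit (Y : Module.End ℂ M) := (Module.End.isUnit_iff Y).mpr hbijY
  set Xu : (Module.End ℂ M)ˣ := hXu.unit with hXudef
  set Yu : (Module.End ℂ M)ˣ := hYu.unit with hYudef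
  have hXuval : (Xu : Module.End ℂ M) = X := hXu.unit_spec
  have hYuval : (Yu : Module.End ℂ M) = Y := hYu.unit_spec
  set σu : (Module.End ℂ M)ˣ :=
    Units.map (algebraMap ℂ (Module.End ℂ M)).toMonoidHom (Units.mk0 q hq) with hσu
  have hσc : ∀ g : (Module.End ℂ M)ˣ, Commute σu g := by
    intro g
    have h4 : (σu : Module.End ℂ M) * (g : Module.End ℂ M)
        = (g : Module.End ℂ M) * (σu : Module.End ℂ M) := by
      simp only [hσu, RingHom.toMonoidHom_eq_coe, Units.coe_map, MonoidHom.coe_coe,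
        Units.val_mk0]
      exact Algebra.commutes q _
    exact Units.ext (by simpa [Units.val_mul] using h4)
  have hσ_apply : ∀ (z : ℤ) (w : M),
      ((σu ^ z : (Module.End ℂ M)ˣ) : Module.End ℂ M) w = q ^ z • w := by
    intro z w
    have h1 : (σu ^ z : (Module.End ℂ M)ˣ)
        = Units.map (algebraMap ℂ (Module.End ℂ M)).toMonoidHom ((Units.mk0 q hq) ^ z) := by
      rw [hσu, map_zpow]
    rw [h1]
    simp only [RingHom.toMonoidHom_eq_coe, Units.coe_map, MonoidHom.coe_coe,
      Units.val_zpow_eq_zpow_val, Units.val_mk0, Module.algebraMap_end_apply]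
  have hcommu : Xu * Yu = σu * (Yu * Xu) := by
    apply Units.ext
    simp only [Units.val_mul, hXuval, hYuval, hσu, RingHom.toMonoidHom_eq_coe,
      Units.coe_map, MonoidHom.coe_coe, Units.val_mk0]
    rw [← Algebra.smul_def]
    exact hrel
  have hc : ∀ i j : ℤ, Xu ^ i * Yu ^ j = σu ^ (i * j) * (Yu ^ j * Xu ^ i) :=
    aux_zpow_comm σu Xu Yu hσc hcommu
  -- eigenvector in unit form
  have hKu : ((Xu ^ (a : ℤ) * Yu ^ (b : ℤ) : (Module.End ℂ M)ˣ) : Module.End ℂ M) v₀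
      = lam • v₀ := by
    have h5 : ((Xu ^ (a : ℤ) * Yu ^ (b : ℤ) : (Module.End ℂ M)ˣ) : Module.End ℂ M)
        = (X ^ a) ∘ₗ (Y ^ b) := by
      rw [zpow_natCast, zpow_natCast, Units.val_mul, Units.val_pow_eq_pow_val,
        Units.val_pow_eq_pow_val, hXuval, hYuval]
      rfl
    rw [h5]
    exact hK
  have hKu2 : ((Xu ^ (a : ℤ) : (Module.End ℂ M)ˣ) : Module.End ℂ M)
      (((Yu ^ (b : ℤ) : (Module.End ℂ M)ˣ) : Module.End ℂ M) v₀) = lam • v₀ := by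
    simpa only [Units.val_mul, Module.End.mul_apply] using hKu
  -- the family W
  set W : ℤ → ℤ → M := fun i j =>
    ((Xu ^ i * Yu ^ j : (Module.End ℂ M)ˣ) : Module.End ℂ M) v₀ with hWdef
  -- shift identity
  have hS : ∀ i j : ℤ, W (i + a) (j + b) = (q ^ ((a : ℤ) * j) * lam) • W i j := by
    intro i j
    have hu : Xu ^ (i + (a : ℤ)) * Yu ^ (j + (b : ℤ))
        = Xu ^ i * (σu ^ ((a : ℤ) * j) * (Yu ^ j * (Xu ^ (a : ℤ) * Yu ^ (b : ℤ)))) := by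
      rw [zpow_add, zpow_add]
      calc Xu ^ i * Xu ^ (a : ℤ) * (Yu ^ j * Yu ^ (b : ℤ))
          = Xu ^ i * ((Xu ^ (a : ℤ) * Yu ^ j) * Yu ^ (b : ℤ)) := by group
        _ = Xu ^ i * ((σu ^ ((a : ℤ) * j) * (Yu ^ j * Xu ^ (a : ℤ))) * Yu ^ (b : ℤ)) := by
            rw [hc (a : ℤ) j]
        _ = Xu ^ i * (σu ^ ((a : ℤ) * j) * (Yu ^ j * (Xu ^ (a : ℤ) * Yu ^ (b : ℤ)))) := by
            group
    show ((Xu ^ (i + (a:ℤ)) * Yu ^ (j + (b:ℤ)) : (Module.End ℂ M)ˣ) : Module.End ℂ M) v₀ = _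
    rw [hu]
    simp only [Units.val_mul, Module.End.mul_apply]
    rw [hKu2, hσ_apply, map_smul, map_smul, map_smul, smul_smul]
    rfl
  -- iterated shift
  have hI : ∀ (r : ℕ) (i j : ℤ),
      W (i + (r : ℤ) * (a : ℤ)) (j + (r : ℤ) * (b : ℤ)) = ccQ q lam a b r j • W i j := by
    intro r
    induction r with
    | zero => intro i j; simp [ccQ]
    | succ r ih =>
        intro i j
        have e1 : i + ((r : ℤ) + 1) * (a : ℤ) = (i + r * a) + a := by ring
        have e2 : j + ((r : ℤ) + 1) * (b : ℤ) = (j + r * b) + b := by ring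
        have e0 : ((r + 1 : ℕ) : ℤ) = (r : ℤ) + 1 := by push_cast; ring
        rw [e0, e1, e2, hS, ih i j, smul_smul]
        simp only [ccQ]
  set v : ℤ → M := fun k => W (k * m) (k * n) with hvdef
  have hv0 : v 0 = v₀ := by
    show ((Xu ^ ((0:ℤ) * m) * Yu ^ ((0:ℤ) * n) : (Module.End ℂ M)ˣ) : Module.End ℂ M) v₀ = v₀
    norm_num
  have hvne : ∀ k, v k ≠ 0 := by
    intro k h
    have hiu : Function.Injective
        ((Xu ^ (k * m) * Yu ^ (k * n) : (Module.End ℂ M)ˣ) : Module.End ℂ M) :=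
      ((Module.End.isUnit_iff _).mp (Xu ^ (k * (m:ℤ)) * Yu ^ (k * (n:ℤ))).isUnit).injective
    apply hv₀
    apply hiu
    rw [map_zero]
    exact h
  -- action of X
  have hXv : ∀ k : ℤ, X (v k) = ccQ q lam a b n ((k - b) * n) • v (k - b) := by
    intro k
    have hX1 : X (v k) = W (k * m + 1) (k * n) := by
      show X (((Xu ^ (k*m) * Yu ^ (k*n) : (Module.End ℂ M)ˣ) : Module.End ℂ M) v₀)
        = ((Xu ^ (k*m+1) * Yu ^ (k*n) : (Module.End ℂ M)ˣ) : Module.End ℂ M) v₀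
      have hu : Xu ^ (k*m+1) * Yu ^ (k*n) = Xu * (Xu ^ (k*m) * Yu ^ (k*n)) := by
        rw [zpow_add, zpow_one, ← mul_assoc, ((Commute.refl Xu).zpow_left (k*m)).eq]
      conv_rhs => rw [hu, Units.val_mul, Module.End.mul_apply, hXuval]
    have hI' := hI n ((k - b) * m) ((k - b) * n)
    rw [show ((k - b) * m + (n : ℤ) * (a : ℤ)) = k * m + 1 by linear_combination hmnZ,
      show ((k - b) * n + (n : ℤ) * (b : ℤ)) = k * n by ring] at hI'
    rw [hX1, hI']
  -- action of Y
  have hYv : ∀ k : ℤ, Y (v k) =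
      (q ^ (-(k * m)) * (ccQ q lam a b m (k * n + 1))⁻¹) • v (k + a) := by
    intro k
    have hY1 : Y (v k) = q ^ (-(k * (m:ℤ))) • W (k * m) (k * n + 1) := by
      have h1 := aux_zpow_comm_one σu Xu Yu hσc hcommu (k * m)
      have h2 : Yu * Xu ^ (k * (m:ℤ)) = σu ^ (-(k * (m:ℤ))) * (Xu ^ (k * (m:ℤ)) * Yu) := by
        rw [zpow_neg, h1, inv_mul_cancel_left]
      have hu : Yu * (Xu ^ (k*(m:ℤ)) * Yu ^ (k*(n:ℤ)))
          = σu ^ (-(k * (m:ℤ))) * (Xu ^ (k*(m:ℤ)) * Yu ^ (k*(n:ℤ)+1)) := by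
        calc Yu * (Xu ^ (k*(m:ℤ)) * Yu ^ (k*(n:ℤ)))
            = (Yu * Xu ^ (k*(m:ℤ))) * Yu ^ (k*(n:ℤ)) := by rw [mul_assoc]
          _ = (σu ^ (-(k * (m:ℤ))) * (Xu ^ (k*(m:ℤ)) * Yu)) * Yu ^ (k*(n:ℤ)) := by rw [h2]
          _ = σu ^ (-(k * (m:ℤ))) * (Xu ^ (k*(m:ℤ)) * Yu ^ (k*(n:ℤ)+1)) := by group
      show Y (((Xu ^ (k*m) * Yu ^ (k*n) : (Module.End ℂ M)ˣ) : Module.End ℂ M) v₀) = _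
      rw [← hYuval, show (Yu : Module.End ℂ M)
            (((Xu ^ (k*m) * Yu ^ (k*n) : (Module.End ℂ M)ˣ) : Module.End ℂ M) v₀)
          = ((Yu * (Xu ^ (k*m) * Yu ^ (k*n)) : (Module.End ℂ M)ˣ) : Module.End ℂ M) v₀ from by
        simp only [Units.val_mul, Module.End.mul_apply], hu, Units.val_mul, Module.End.mul_apply,
        hσ_apply]
    have hI' := hI m (k * m) (k * n + 1)
    rw [show (k * m + (m : ℤ) * (a : ℤ)) = (k + a) * m by ring,
      show (k * n + 1 + (m : ℤ) * (b : ℤ)) = (k + a) * n by linear_combination -hmnZ] at hI'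
    have hWc : W (k * m) (k * n + 1) = (ccQ q lam a b m (k * n + 1))⁻¹ • v (k + a) := by
      show _ = _ • W ((k+a) * m) ((k+a) * n)
      rw [hI', smul_smul, inv_mul_cancel₀ (ccQ_ne_zero hq hlam a b m _), one_smul]
    rw [hY1, hWc, smul_smul]
  -- eigenvector property
  have hKv : ∀ k : ℤ, ((X ^ a) ∘ₗ (Y ^ b)) (v k) = (q ^ k * lam) • v k := by
    intro k
    have h5 : ((X ^ a) ∘ₗ (Y ^ b))
        = ((Xu ^ (a : ℤ) * Yu ^ (b : ℤ) : (Module.End ℂ M)ˣ) : Module.End ℂ M) := by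
      rw [zpow_natCast, zpow_natCast, Units.val_mul, Units.val_pow_eq_pow_val,
        Units.val_pow_eq_pow_val, hXuval, hYuval]
      rfl
    have h2 : Yu ^ (b:ℤ) * Xu ^ (k * (m:ℤ))
        = σu ^ (-(k * (m:ℤ) * b)) * (Xu ^ (k * (m:ℤ)) * Yu ^ (b:ℤ)) := by
      rw [zpow_neg, hc (k * m) b, inv_mul_cancel_left]
    have hu : (Xu ^ (a:ℤ) * Yu ^ (b:ℤ)) * (Xu ^ (k*(m:ℤ)) * Yu ^ (k*(n:ℤ)))
        = σu ^ (-(k * (m:ℤ) * b)) * (Xu ^ (k*(m:ℤ) + a) * Yu ^ (k*(n:ℤ) + b)) := by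
      calc (Xu ^ (a:ℤ) * Yu ^ (b:ℤ)) * (Xu ^ (k*(m:ℤ)) * Yu ^ (k*(n:ℤ)))
          = Xu ^ (a:ℤ) * ((Yu ^ (b:ℤ) * Xu ^ (k*(m:ℤ))) * Yu ^ (k*(n:ℤ))) := by group
        _ = Xu ^ (a:ℤ) * ((σu ^ (-(k * (m:ℤ) * b)) * (Xu ^ (k * (m:ℤ)) * Yu ^ (b:ℤ)))
              * Yu ^ (k*(n:ℤ))) := by rw [h2]
        _ = (Xu ^ (a:ℤ) * σu ^ (-(k * (m:ℤ) * b)))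
              * ((Xu ^ (k * (m:ℤ)) * Yu ^ (b:ℤ)) * Yu ^ (k*(n:ℤ))) := by group
        _ = (σu ^ (-(k * (m:ℤ) * b)) * Xu ^ (a:ℤ))
              * ((Xu ^ (k * (m:ℤ)) * Yu ^ (b:ℤ)) * Yu ^ (k*(n:ℤ))) := by
            rw [((hσc (Xu ^ (a:ℤ))).zpow_left (-(k * (m:ℤ) * b))).eq]
        _ = σu ^ (-(k * (m:ℤ) * b)) * (Xu ^ (k*(m:ℤ) + a) * Yu ^ (k*(n:ℤ) + b)) := by group
    have happ : ((X ^ a) ∘ₗ (Y ^ b)) (v k)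
        = q ^ (-(k * (m:ℤ) * b)) • W (k * m + a) (k * n + b) := by
      rw [h5]
      show ((Xu ^ (a:ℤ) * Yu ^ (b:ℤ) : (Module.End ℂ M)ˣ) : Module.End ℂ M)
        (((Xu ^ (k*m) * Yu ^ (k*n) : (Module.End ℂ M)ˣ) : Module.End ℂ M) v₀) = _
      rw [show ((Xu ^ (a:ℤ) * Yu ^ (b:ℤ) : (Module.End ℂ M)ˣ) : Module.End ℂ M)
            (((Xu ^ (k*m) * Yu ^ (k*n) : (Module.End ℂ M)ˣ) : Module.End ℂ M) v₀)
          = (((Xu ^ (a:ℤ) * Yu ^ (b:ℤ)) * (Xu ^ (k*m) * Yu ^ (k*n))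
            : (Module.End ℂ M)ˣ) : Module.End ℂ M) v₀ from by
        simp only [Units.val_mul, Module.End.mul_apply], hu, Units.val_mul, Module.End.mul_apply,
        hσ_apply]
    rw [happ, hS, smul_smul]
    congr 1
    rw [← mul_assoc, ← zpow_add₀ hq]
    congr 2
    linear_combination k * hmnZ
  -- linear independence
  have hinj : Function.Injective (fun k : ℤ => q ^ k * lam) := by
    intro i j hij
    simp only at hij
    have h6 : q ^ i = q ^ j := mul_right_cancel₀ hlam hij
    by_contra hne
    have hz : i - j ≠ 0 := sub_ne_zero.mpr hne
    have h1 : q ^ (i - j) = 1 := by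
      rw [zpow_sub₀ hq, h6, div_self (zpow_ne_zero _ hq)]
    have habs : q ^ ((i - j).natAbs) = 1 := by
      rcases Int.natAbs_eq (i - j) with he | he
      · rw [← zpow_natCast, ← he, h1]
      · rw [he, zpow_neg] at h1
        rw [← zpow_natCast]
        exact inv_eq_one.mp h1
    obtain ⟨t, ht⟩ : ∃ t, (i - j).natAbs = t + 1 := by
      have := Int.natAbs_ne_zero.mpr hz
      exact ⟨(i - j).natAbs - 1, by omega⟩
    exact hroot t (ht ▸ habs)
  have hli : LinearIndependent ℂ v :=
    Module.End.eigenvectors_linearIndependent' ((X ^ a) ∘ₗ (Y ^ b) : Module.End ℂ M)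
      (fun k : ℤ => q ^ k * lam) hinj v
      (fun k => ⟨Module.End.mem_eigenspace_iff.mpr (hKv k), hvne k⟩)
  -- spanning
  have hsp : Submodule.span ℂ (Set.range v) = ⊤ := by
    rcases hsimple (Submodule.span ℂ (Set.range v))
      (fun w hw => by
        induction hw using Submodule.span_induction with
        | mem w hwmem =>
            obtain ⟨k, rfl⟩ := hwmem
            rw [hXv k]
            exact Submodule.smul_mem _ _ (Submodule.subset_span ⟨k - b, rfl⟩)
        | zero => simp
        | add _ _ _ _ h1 h2 => rw [map_add]; exact Submodule.add_mem _ h1 h2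
        | smul c _ _ h1 => rw [map_smul]; exact Submodule.smul_mem _ _ h1)
      (fun w hw => by
        induction hw using Submodule.span_induction with
        | mem w hwmem =>
            obtain ⟨k, rfl⟩ := hwmem
            rw [hYv k]
            exact Submodule.smul_mem _ _ (Submodule.subset_span ⟨k + a, rfl⟩)
        | zero => simp
        | add _ _ _ _ h1 h2 => rw [map_add]; exact Submodule.add_mem _ h1 h2
        | smul c _ _ h1 => rw [map_smul]; exact Submodule.smul_mem _ _ h1) with h | h
    · exfalso
      apply hvne 0
      have : v 0 ∈ (⊥ : Submodule ℂ M) := h ▸ Submodule.subset_span ⟨0, rfl⟩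
      simpa using this
    · exact h
  exact ⟨v, hli, hsp, hXv, hYv⟩
section TestIso

variable (q lam : ℂ)

theorem qp_iso (hq : q ≠ 0) (hroot : ∀ k : ℕ, q ^ (k + 1) ≠ 1)
    (a b : ℕ) (ha : 0 < a) (hb : 0 < b)
    (m n : ℕ) (hmn : a * n = b * m + 1) (hlam : lam ≠ 0)
    (M : Type*) [AddCommGroup M] [Module ℂ M]
    (X Y : M →ₗ[ℂ] M) (hrel : X ∘ₗ Y = q • (Y ∘ₗ X))
    (hsimple : ∀ W : Submodule ℂ M,
      (∀ w ∈ W, X w ∈ W) → (∀ w ∈ W, Y w ∈ W) → W = ⊥ ∨ W = ⊤)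
    (v₀ : M) (hv₀ : v₀ ≠ 0)
    (hK : ((X ^ a) ∘ₗ (Y ^ b)) v₀ = lam • v₀)
    (M' : Type*) [AddCommGroup M'] [Module ℂ M']
    (X' Y' : M' →ₗ[ℂ] M') (hrel' : X' ∘ₗ Y' = q • (Y' ∘ₗ X'))
    (hsimple' : ∀ W : Submodule ℂ M',
      (∀ w ∈ W, X' w ∈ W) → (∀ w ∈ W, Y' w ∈ W) → W = ⊥ ∨ W = ⊤)
    (v₀' : M') (hv₀' : v₀' ≠ 0)
    (hK' : ((X' ^ a) ∘ₗ (Y' ^ b)) v₀' = lam • v₀') :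
    ∃ e : M ≃ₗ[ℂ] M',
      (∀ w : M, e (X w) = X' (e w)) ∧ (∀ w : M, e (Y w) = Y' (e w)) := by
  obtain ⟨v, hli, hsp, hXv, hYv⟩ := qp_module_structure q hq hroot a b ha hb m n hmn
    lam hlam M X Y hrel hsimple v₀ hv₀ hK
  obtain ⟨v', hli', hsp', hXv', hYv'⟩ := qp_module_structure q hq hroot a b ha hb m n hmn
    lam hlam M' X' Y' hrel' hsimple' v₀' hv₀' hK'
  set B : Module.Basis ℤ ℂ M := Module.Basis.mk hli hsp.ge with hB
  set B' : Module.Basis ℤ ℂ M' := Module.Basis.mk hli' hsp'.ge with hB'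
  set e : M ≃ₗ[ℂ] M' := B.equiv B' (Equiv.refl ℤ) with he_def
  have he : ∀ j : ℤ, e (v j) = v' j := by
    intro j
    rw [show v j = B j from (Module.Basis.mk_apply hli hsp.ge j).symm, he_def, Module.Basis.equiv_apply]
    exact Module.Basis.mk_apply hli' hsp'.ge j
  have heqX : (e : M →ₗ[ℂ] M') ∘ₗ X = X' ∘ₗ (e : M →ₗ[ℂ] M') := by
    apply B.ext
    intro k
    simp only [LinearMap.comp_apply, LinearEquiv.coe_coe]
    rw [show B k = v k from Module.Basis.mk_apply hli hsp.ge k, hXv k, map_smul, he, he, hXv' k]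
  have heqY : (e : M →ₗ[ℂ] M') ∘ₗ Y = Y' ∘ₗ (e : M →ₗ[ℂ] M') := by
    apply B.ext
    intro k
    simp only [LinearMap.comp_apply, LinearEquiv.coe_coe]
    rw [show B k = v k from Module.Basis.mk_apply hli hsp.ge k, hYv k, map_smul, he, he, hYv' k]
  exact ⟨e, fun w => by simpa using LinearMap.ext_iff.mp heqX w,
    fun w => by simpa using LinearMap.ext_iff.mp heqY w⟩

end TestIso

lemma bezout_nat (a b : ℕ) (ha : 0 < a) (hb : 0 < b) (hcop : Nat.Coprime a b) :
    ∃ m n : ℕ, a * n = b * m + 1 := by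
  have h := Nat.gcd_eq_gcd_ab a b
  rw [hcop] at h
  set s := Nat.gcdA a b with hs
  set t := Nat.gcdB a b with ht
  -- h : (1 : ℤ) = a * s + b * t
  set K : ℤ := |s| + |t| with hK
  have hn' : (0:ℤ) ≤ s + b * K := by
    have h1 : (1:ℤ) ≤ b := by exact_mod_cast hb
    nlinarith [abs_nonneg s, abs_nonneg t, le_abs_self s, neg_abs_le s]
  have hm' : (0:ℤ) ≤ -t + a * K := by
    have h1 : (1:ℤ) ≤ a := by exact_mod_cast ha
    nlinarith [abs_nonneg s, abs_nonneg t, le_abs_self t, neg_abs_le t]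
  refine ⟨(-t + a * K).toNat, (s + b * K).toNat, ?_⟩
  have key : (a:ℤ) * (s + b * K) = b * (-t + a * K) + 1 := by push_cast at h; linear_combination -h
  have : (a:ℤ) * ((s + b * K).toNat) = (b:ℤ) * ((-t + a * K).toNat) + 1 := by
    rw [Int.toNat_of_nonneg hn', Int.toNat_of_nonneg hm']
    exact key
  exact_mod_cast this

/-- for `q` not a root of unity and `(c₁, c₂) ∈ (ℂ*)²`, the twist
of the simple `A_q(2)`-module `L_(a,b)[1]` by the automorphism
`τ_c : x ↦ c₁x, y ↦ c₂y` is isomorphic to `L_(a,b)[c₁^a c₂^b]`.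
Here `L_(a,b)[λ]` is any simple module with operators satisfying the quantum
plane relation and a (cyclic) eigenvector of `K = x^a y^b` of eigenvalue `λ`,
and the twisted action is `u ⋆ w = τ_c(u) w`, i.e. `x` acts by `c₁ • X` and
`y` by `c₂ • Y`. -/
theorem twist_of_simple_module (q : ℂ) (hq : q ≠ 0)
    (hroot : ∀ k : ℕ, q ^ (k + 1) ≠ 1)
    (a b : ℕ) (ha : 0 < a) (hb : 0 < b) (hcop : Nat.Coprime a b)
    (c₁ c₂ : ℂ) (hc₁ : c₁ ≠ 0) (hc₂ : c₂ ≠ 0)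
    (M : Type*) [AddCommGroup M] [Module ℂ M]
    (X Y : M →ₗ[ℂ] M) (hrel : X ∘ₗ Y = q • (Y ∘ₗ X))
    (hsimple : ∀ W : Submodule ℂ M,
      (∀ w ∈ W, X w ∈ W) → (∀ w ∈ W, Y w ∈ W) → W = ⊥ ∨ W = ⊤)
    (v₀ : M) (hv₀ : v₀ ≠ 0)
    (hK : ((X ^ a) ∘ₗ (Y ^ b)) v₀ = v₀)
    (M' : Type*) [AddCommGroup M'] [Module ℂ M']
    (X' Y' : M' →ₗ[ℂ] M') (hrel' : X' ∘ₗ Y' = q • (Y' ∘ₗ X'))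
    (hsimple' : ∀ W : Submodule ℂ M',
      (∀ w ∈ W, X' w ∈ W) → (∀ w ∈ W, Y' w ∈ W) → W = ⊥ ∨ W = ⊤)
    (v₀' : M') (hv₀' : v₀' ≠ 0)
    (hK' : ((X' ^ a) ∘ₗ (Y' ^ b)) v₀' = (c₁ ^ a * c₂ ^ b) • v₀') :
    ∃ e : M ≃ₗ[ℂ] M',
      (∀ m : M, e ((c₁ • X) m) = X' (e m)) ∧ (∀ m : M, e ((c₂ • Y) m) = Y' (e m)) := by
  obtain ⟨m, n, hmn⟩ := bezout_nat a b ha hb hcop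
  have hlam : c₁ ^ a * c₂ ^ b ≠ 0 := mul_ne_zero (pow_ne_zero _ hc₁) (pow_ne_zero _ hc₂)
  have hXY : ∀ w, X (Y w) = q • Y (X w) := by
    intro w
    have := LinearMap.ext_iff.mp hrel w
    simpa using this
  have hrelt : (c₁ • X) ∘ₗ (c₂ • Y) = q • ((c₂ • Y) ∘ₗ (c₁ • X)) := by
    apply LinearMap.ext
    intro w
    simp only [LinearMap.comp_apply, LinearMap.smul_apply, map_smul]
    rw [hXY w]
    simp only [smul_smul]
    congr 1
    ring
  have hsimplet : ∀ W : Submodule ℂ M,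
      (∀ w ∈ W, (c₁ • X) w ∈ W) → (∀ w ∈ W, (c₂ • Y) w ∈ W) → W = ⊥ ∨ W = ⊤ := by
    intro W h1 h2
    apply hsimple W
    · intro w hw
      have hXw : X w = c₁⁻¹ • ((c₁ • X) w) := by
        simp [smul_smul, inv_mul_cancel₀ hc₁]
      rw [hXw]
      exact Submodule.smul_mem _ _ (h1 w hw)
    · intro w hw
      have hYw : Y w = c₂⁻¹ • ((c₂ • Y) w) := by
        simp [smul_smul, inv_mul_cancel₀ hc₂]
      rw [hYw]
      exact Submodule.smul_mem _ _ (h2 w hw)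
  have hKt : (((c₁ • X) ^ a) ∘ₗ ((c₂ • Y) ^ b)) v₀ = (c₁ ^ a * c₂ ^ b) • v₀ := by
    rw [smul_pow, smul_pow]
    have hKapp : (X ^ a) ((Y ^ b) v₀) = v₀ := by simpa using hK
    simp only [LinearMap.comp_apply, LinearMap.smul_apply, map_smul]
    rw [hKapp, smul_smul]
    congr 1
    ring
  obtain ⟨e, h1, h2⟩ := qp_iso q (c₁ ^ a * c₂ ^ b) hq hroot a b ha hb m n hmn hlam
    M (c₁ • X) (c₂ • Y) hrelt hsimplet v₀ hv₀ hKt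
    M' X' Y' hrel' hsimple' v₀' hv₀' hK'
  exact ⟨e, h1, h2⟩
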